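/- Let X be a compact metric space, let f : X → X be a continuous map, and let μ be an f-invariant Borel probability measure on X. If the statistical basin B(μ) = {x ∈ X : the empirical measures μ_k(x) converge weak-star to μ} is dense in X, then the set {x ∈ X : μ is a weak-star limit point of the sequence (μ_k(x))_k} is a residual subset of X (it contains a dense G_δ set). -/
import Mathlib


open MeasureTheory Filter Topology

/-- The Birkhoff average `(1/k) ∑_{l=0}^{k-1} g(f^l(x))`, i.e. the integral of the
observable `g` against the `k`-th empirical measure `μ_k(x) = (1/k) ∑_{l<k} δ_{f^l(x)}`. -/
noncomputable def birkhoffAvg {X : Type*} (f : X → X) (g : X → ℝ) (x : X) (k : ℕ) : ℝ :=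
  (∑ l ∈ Finset.range k, g (f^[l] x)) / k

section Aux

variable {X : Type*} [MetricSpace X] [CompactSpace X] [MeasurableSpace X] [BorelSpace X]

/-- The `k`-th empirical measure (with a junk value `δ_x` at `k = 0`). -/
noncomputable def empMeasure (f : X → X) (x : X) (k : ℕ) : Measure X :=
  if k = 0 then Measure.dirac x
  else (k : ENNReal)⁻¹ • ∑ l ∈ Finset.range k, Measure.dirac (f^[l] x)

instance empMeasure_isProb (f : X → X) (x : X) (k : ℕ) :
    IsProbabilityMeasure (empMeasure f x k) := by
  constructor
  unfold empMeasure
  split_ifs with hk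
  · simp
  · rw [Measure.smul_apply, Measure.finset_sum_apply]
    simp only [Measure.dirac_apply_of_mem (Set.mem_univ _)]
    simp only [Finset.sum_const, Finset.card_range, nsmul_eq_mul, mul_one, smul_eq_mul]
    exact ENNReal.inv_mul_cancel (by exact_mod_cast hk) (by simp)

lemma integrable_of_continuous {g : X → ℝ} (hg : Continuous g) (ν : Measure X)
    [IsFiniteMeasure ν] : Integrable g ν :=
  (BoundedContinuousFunction.mkOfCompact ⟨g, hg⟩).integrable ν

lemma integral_empMeasure {f : X → X} {g : X → ℝ} (hg : Continuous g) (x : X) {k : ℕ}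
    (hk : k ≠ 0) : ∫ y, g y ∂(empMeasure f x k) = birkhoffAvg f g x k := by
  unfold empMeasure birkhoffAvg
  rw [if_neg hk, integral_smul_measure,
    integral_finset_sum_measure (fun l _ => integrable_of_continuous hg _)]
  simp only [integral_dirac]
  rw [ENNReal.toReal_inv, ENNReal.toReal_natCast, smul_eq_mul, inv_mul_eq_div]

end Aux

/-- Let `X` be a compact metric space, `f : X → X` continuous and `μ` an `f`-invariant
Borel probability measure on `X`. If the statistical basin
`B(μ) = {x : μ_k(x) → μ weak-star}` is dense, then the set of points `x` for which `μ`
is a weak-star limit point of the sequence of empirical measures `(μ_k(x))_k`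
(i.e. some subsequence converges to `μ` weak-star, meaning the Birkhoff averages of every
continuous function `h` along that subsequence converge to `∫ h dμ`) is residual in `X`. -/
theorem residual_limit_point_of_dense_basin {X : Type*} [MetricSpace X] [CompactSpace X]
    [MeasurableSpace X] [BorelSpace X]
    (f : X → X) (hf : Continuous f)
    (μ : Measure X) [IsProbabilityMeasure μ] (hinv : μ.map f = μ)
    (hdense : Dense {x : X | ∀ h : X → ℝ, Continuous h →
      Tendsto (birkhoffAvg f h x) atTop (𝓝 (∫ y, h y ∂μ))}) :
    {x : X | ∃ φ : ℕ → ℕ, StrictMono φ ∧ ∀ h : X → ℝ, Continuous h →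
      Tendsto (fun i => birkhoffAvg f h x (φ i)) atTop (𝓝 (∫ y, h y ∂μ))} ∈
        residual X := by
  classical
  set B := {x : X | ∀ h : X → ℝ, Continuous h →
      Tendsto (birkhoffAvg f h x) atTop (𝓝 (∫ y, h y ∂μ))} with hB
  let ν : X → ℕ → ProbabilityMeasure X := fun x k => ⟨empMeasure f x k, inferInstance⟩
  let μ' : ProbabilityMeasure X := ⟨μ, inferInstance⟩
  -- continuity of the empirical measures in `x`
  have hbirk_cont : ∀ (g : X → ℝ), Continuous g → ∀ k : ℕ,
      Continuous (fun x => birkhoffAvg f g x k) := by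
    intro g hg k
    unfold birkhoffAvg
    exact (continuous_finset_sum _ fun l _ => hg.comp (hf.iterate l)).div_const _
  have hcont : ∀ k : ℕ, Continuous (fun x => ν x k) := by
    intro k
    rw [continuous_iff_continuousAt]
    intro x
    rw [ContinuousAt, ProbabilityMeasure.tendsto_iff_forall_integral_tendsto]
    intro g
    have hgc : Continuous (fun y => ∫ ω, g ω ∂(ν y k : Measure X)) := by
      rcases eq_or_ne k 0 with hk | hk
      · have : (fun y => ∫ ω, g ω ∂(ν y k : Measure X)) = fun y => g y := by
          funext y
          show ∫ ω, g ω ∂(empMeasure f y k) = g y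
          rw [hk]; unfold empMeasure; rw [if_pos rfl, integral_dirac]
        rw [this]; exact g.continuous
      · have : (fun y => ∫ ω, g ω ∂(ν y k : Measure X)) =
            fun y => birkhoffAvg f (fun z => g z) y k := by
          funext y; exact integral_empMeasure g.continuous y hk
        rw [this]; exact hbirk_cont _ g.continuous k
    exact hgc.continuousAt
  -- on the basin, the empirical measures converge to `μ'`
  have hbasin : ∀ x ∈ B, Tendsto (fun k => ν x k) atTop (𝓝 μ') := by
    intro x hx
    rw [ProbabilityMeasure.tendsto_iff_forall_integral_tendsto]
    intro g
    have hx' := hx (fun z => g z) g.continuous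
    refine hx'.congr' ?_
    filter_upwards [eventually_ge_atTop 1] with k hk
    exact (integral_empMeasure g.continuous x (by omega)).symm
  -- an antitone basis of open neighborhoods of `μ'`
  obtain ⟨V, hV, hVb⟩ := (nhds_basis_opens μ').exists_antitone_subbasis
  -- the good Gδ set
  have key : (⋂ n : ℕ, ⋂ N : ℕ, ⋃ k, ⋃ (_ : N ≤ k), (fun x => ν x k) ⁻¹' V n)
      ∈ residual X := by
    rw [countable_iInter_mem]
    intro n
    rw [countable_iInter_mem]
    intro N
    have hopen : IsOpen (⋃ k, ⋃ (_ : N ≤ k), (fun x => ν x k) ⁻¹' V n) :=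
      isOpen_iUnion fun k => isOpen_iUnion fun _ => (hV n).2.preimage (hcont k)
    have hdense' : Dense (⋃ k, ⋃ (_ : N ≤ k), (fun x => ν x k) ⁻¹' V n) := by
      refine hdense.mono ?_
      intro x hx
      have := (hbasin x hx).eventually ((hV n).2.mem_nhds (hV n).1)
      rw [eventually_atTop] at this
      obtain ⟨M, hM⟩ := this
      simp only [Set.mem_iUnion]
      exact ⟨max M N, le_max_right _ _, hM _ (le_max_left _ _)⟩
    exact residual_of_dense_open hopen hdense'
  refine mem_of_superset key ?_
  intro x hx
  simp only [Set.mem_iInter, Set.mem_iUnion] at hx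
  have hfreq : ∀ n : ℕ, ∃ᶠ k in atTop, ν x k ∈ V n := by
    intro n
    rw [frequently_atTop]
    intro N
    obtain ⟨k, hk1, hk2⟩ := hx n N
    exact ⟨k, hk1, hk2⟩
  obtain ⟨φ, hφ, hφ2⟩ := extraction_forall_of_frequently hfreq
  have htend : Tendsto (fun i => ν x (φ i)) atTop (𝓝 μ') := hVb.tendsto hφ2
  refine ⟨φ, hφ, ?_⟩
  intro h hc
  have := ProbabilityMeasure.tendsto_iff_forall_integral_tendsto.mp htend
    (BoundedContinuousFunction.mkOfCompact ⟨h, hc⟩)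
  refine this.congr' ?_
  filter_upwards [eventually_ge_atTop 1] with i hi
  have hφi : φ i ≠ 0 := by
    have := hφ.le_apply (x := i)
    omega
  exact integral_empMeasure hc x hφi
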